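/- Let V be a real inner product space of finite dimension at least 2, and let K : V × V → V be an ℝ-bilinear map satisfying K(X,Y) = K(Y,X) and ⟨K(X,Y), Z⟩ = ⟨Y, K(X,Z)⟩ for all X, Y, Z ∈ V. If K(Y,u) = 0 for all Y, u ∈ V with ⟨Y,u⟩ = 0, then K = 0. -/

import Mathlib

open scoped RealInnerProductSpace

/-- If `V` is a real inner product space of dimension at least 2 and
`K` is a symmetric bilinear map with values in `V` satisfying
`⟪K X Y, Z⟫ = ⟪Y, K X Z⟫`, and `K Y u = 0` whenever `⟪Y, u⟫ = 0`, then `K = 0`. -/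
theorem stmt_2
    {V : Type*} [NormedAddCommGroup V] [InnerProductSpace ℝ V] [FiniteDimensional ℝ V]
    (hdim : 2 ≤ Module.finrank ℝ V)
    (K : V →ₗ[ℝ] V →ₗ[ℝ] V)
    (hsymm : ∀ X Y : V, K X Y = K Y X)
    (hadj : ∀ X Y Z : V, ⟪K X Y, Z⟫ = ⟪Y, K X Z⟫)
    (h : ∀ Y u : V, ⟪Y, u⟫ = 0 → K Y u = 0) :
    K = 0 := by
  have hdiag : ∀ X : V, K X X = 0 := by
    intro X
    rcases eq_or_ne X 0 with hX | hX
    · simp [hX]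
    -- find nonzero u orthogonal to X
    have hbot : ((ℝ ∙ X)ᗮ : Submodule ℝ V) ≠ ⊥ := by
      intro hb
      have h1 : Module.finrank ℝ (ℝ ∙ X) + Module.finrank ℝ ((ℝ ∙ X)ᗮ : Submodule ℝ V)
          = Module.finrank ℝ V := Submodule.finrank_add_finrank_orthogonal _
      have h2 : Module.finrank ℝ (ℝ ∙ X) = 1 := finrank_span_singleton hX
      rw [hb, h2, finrank_bot] at h1
      omega
    obtain ⟨u0, hu0mem, hu0⟩ := Submodule.exists_mem_ne_zero_of_ne_bot hbot
    set u : V := (‖X‖ / ‖u0‖) • u0 with hu_def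
    have hXu : ⟪X, u⟫ = 0 := by
      have := (Submodule.mem_orthogonal _ u0).1 hu0mem X (Submodule.mem_span_singleton_self X)
      simp [hu_def, inner_smul_right, this]
    have hnu : ‖u‖ = ‖X‖ := by
      rw [hu_def, norm_smul]
      field_simp
      rw [norm_div, norm_norm, norm_norm]
      have hu0n := norm_ne_zero_iff.2 hu0
      field_simp
    have hKXu : K X u = 0 := h X u hXu
    have hKuX : K u X = 0 := (hsymm u X).trans hKXu
    -- ⟨X+u, X-u⟩ = 0
    have horth : ⟪X + u, X - u⟫ = 0 := by
      rw [inner_add_left, inner_sub_right, inner_sub_right]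
      rw [real_inner_self_eq_norm_sq, real_inner_self_eq_norm_sq, hnu]
      have h2 : ⟪u, X⟫ = (0:ℝ) := by rw [real_inner_comm]; exact hXu
      rw [h2, hXu]
      ring
    have hKsum : K (X + u) (X - u) = 0 := h _ _ horth
    have heq : K X X = K u u := by
      have : K X X + K u X - (K X u + K u u) = 0 := by
        simpa [map_add, map_sub, LinearMap.add_apply, LinearMap.sub_apply] using hKsum
      rw [hKXu, hKuX] at this
      rw [← sub_eq_zero]
      rw [add_zero, zero_add] at this
      exact this
    have hKXX_X : ⟪K X X, X⟫ = 0 := by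
      rw [heq, hadj u u X, hKuX, inner_zero_right]
    -- show all inner products vanish
    have hall : ∀ z : V, ⟪K X X, z⟫ = 0 := by
      intro z
      set c : ℝ := ⟪X, z⟫ / ‖X‖ ^ 2 with hc
      have hXn : (‖X‖ : ℝ) ^ 2 ≠ 0 := by
        exact pow_ne_zero _ (norm_ne_zero_iff.2 hX)
      have hw : ⟪X, z - c • X⟫ = 0 := by
        rw [inner_sub_right, inner_smul_right, real_inner_self_eq_norm_sq, hc]
        field_simp
        ring
      have hKw : K X (z - c • X) = 0 := h X _ hw
      have h1 : ⟪K X X, z - c • X⟫ = 0 := by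
        rw [hadj X X (z - c • X), hKw, inner_zero_right]
      have := h1
      rw [inner_sub_right, inner_smul_right, hKXX_X] at this
      linarith
    have := hall (K X X)
    exact inner_self_eq_zero.1 this
  ext X Y
  have := hdiag (X + Y)
  simp only [map_add, LinearMap.add_apply, hdiag X, hdiag Y, zero_add, add_zero] at this
  rw [hsymm Y X] at this
  have h2 : (2 : ℝ) • K X Y = 0 := by
    rw [two_smul]; exact this
  simpa using smul_eq_zero.1 h2
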